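/- For every integer ν ≥ 0, ν + Σ_{m=2}^{ν} Σ_{l=1}^{ν−1} l·C(ν+m−l−2, 2m−3) = Σ_{m=1}^{ν} C(ν+m−1, 2m−1). -/
import Mathlib

/-- Hockey stick with truncated subtraction: for `M ≤ L + r` and `1 ≤ r`,
`∑_{l=j}^{L} C(M-l, r) = C(M-j+1, r+1)`. -/
lemma hs_aux (r M L : ℕ) (hr : 1 ≤ r) (h : M ≤ L + r) :
    ∀ n j, L + 1 ≤ j + n → 1 ≤ j →
      ∑ l ∈ Finset.Icc j L, Nat.choose (M - l) r = Nat.choose (M - j + 1) (r + 1) := by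
  intro n
  induction n with
  | zero =>
    intro j hj _
    rw [Finset.Icc_eq_empty (by omega), Finset.sum_empty,
        Nat.choose_eq_zero_of_lt (by omega)]
  | succ n ih =>
    intro j hj hj1
    by_cases hL : L + 1 ≤ j
    · rw [Finset.Icc_eq_empty (by omega), Finset.sum_empty,
          Nat.choose_eq_zero_of_lt (by omega)]
    · have hjL : j ≤ L := by omega
      have hsplit : Finset.Icc j L = insert j (Finset.Icc (j + 1) L) := by
        ext x; simp only [Finset.mem_Icc, Finset.mem_insert]; omega
      rw [hsplit, Finset.sum_insert (by simp [Finset.mem_Icc]),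
          ih (j + 1) (by omega) (by omega)]
      rcases le_or_gt (j + 1) M with hc | hc
      · have e1 : M - (j + 1) + 1 = M - j := by omega
        have e2 : M - j + 1 = (M - j - 1) + 1 + 1 := by omega
        have e3 : M - j = (M - j - 1) + 1 := by omega
        rw [e1, e2, Nat.choose_succ_succ, ← e3]
      · rw [Nat.choose_eq_zero_of_lt (by omega), Nat.choose_eq_zero_of_lt (by omega),
            Nat.choose_eq_zero_of_lt (by omega)]

/-- Double hockey stick: `∑_{l=1}^{L} l * C(M-l, r) = C(M+1, r+2)` when `M ≤ L + r`. -/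
lemma double_hs (r M L : ℕ) (hr : 1 ≤ r) (h : M ≤ L + r) :
    ∑ l ∈ Finset.Icc 1 L, l * Nat.choose (M - l) r = Nat.choose (M + 1) (r + 2) := by
  have step1 : ∑ l ∈ Finset.Icc 1 L, l * Nat.choose (M - l) r
      = ∑ l ∈ Finset.Ico 1 (L + 1), ∑ i ∈ Finset.Ico 1 (l + 1), Nat.choose (M - l) r := by
    rw [← Finset.Ico_add_one_right_eq_Icc]
    refine Finset.sum_congr rfl fun l _ => ?_
    rw [Finset.sum_const, Nat.card_Ico, smul_eq_mul, Nat.add_sub_cancel]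
  rw [step1, ← Finset.sum_Ico_Ico_comm]
  have step2 : ∀ i ∈ Finset.Ico 1 (L + 1),
      ∑ l ∈ Finset.Ico i (L + 1), Nat.choose (M - l) r = Nat.choose (M + 1 - i) (r + 1) := by
    intro i hi
    simp only [Finset.mem_Ico] at hi
    rw [← Finset.Ico_add_one_right_eq_Icc] at *
    rw [show Finset.Ico i (L + 1) = Finset.Icc i L from (Finset.Ico_add_one_right_eq_Icc i L)]
    rw [hs_aux r M L hr h (L + 1) i (by omega) hi.1]
    rcases le_or_gt i M with hc | hc
    · congr 1; omega
    · rw [Nat.choose_eq_zero_of_lt (by omega), Nat.choose_eq_zero_of_lt (by omega)]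
  rw [Finset.sum_congr rfl step2,
      show Finset.Ico 1 (L + 1) = Finset.Icc 1 L from Finset.Ico_add_one_right_eq_Icc 1 L,
      hs_aux (r + 1) (M + 1) L (by omega) (by omega) (L + 1) 1 (by omega) le_rfl]
  norm_num

theorem binomial_identity_two (ν : ℕ) :
    ν + ∑ m ∈ Finset.Icc 2 ν, ∑ l ∈ Finset.Icc 1 (ν - 1),
        l * Nat.choose (ν + m - l - 2) (2 * m - 3) =
      ∑ m ∈ Finset.Icc 1 ν, Nat.choose (ν + m - 1) (2 * m - 1) := by
  rcases Nat.eq_zero_or_pos ν with hν | hν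
  · subst hν; simp
  -- inner sum evaluates by double hockey stick
  have inner : ∀ m ∈ Finset.Icc 2 ν,
      ∑ l ∈ Finset.Icc 1 (ν - 1), l * Nat.choose (ν + m - l - 2) (2 * m - 3)
        = Nat.choose (ν + m - 1) (2 * m - 1) := by
    intro m hm
    simp only [Finset.mem_Icc] at hm
    have e : ∀ l, ν + m - l - 2 = (ν + m - 2) - l := fun l => by omega
    simp only [e]
    rw [double_hs (2 * m - 3) (ν + m - 2) (ν - 1) (by omega) (by omega)]
    congr 1 <;> omega
  rw [Finset.sum_congr rfl inner]
  have hsplit : Finset.Icc 1 ν = insert 1 (Finset.Icc 2 ν) := by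
    ext x; simp only [Finset.mem_Icc, Finset.mem_insert]; omega
  rw [hsplit, Finset.sum_insert (by simp [Finset.mem_Icc])]
  have : Nat.choose (ν + 1 - 1) (2 * 1 - 1) = ν := by
    norm_num
  omega
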